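/- For every cyclic group G of order n ≥ 3 and for every integer m ≥ 5, G has an m-GRR. (In fact, the automorphism group of the explicitly constructed graph Δ on G×{0,…,m−1} described below is exactly the group of right translations by G.) -/

import Mathlib

/-- A permutation `σ` of the vertex set is an automorphism of the simple graph `Γ`. -/
def IsGraphAut {V : Type*} (Γ : SimpleGraph V) (σ : Equiv.Perm V) : Prop :=
  ∀ u v : V, Γ.Adj (σ u) (σ v) ↔ Γ.Adj u v

/-- `G` admits an `m`-graphical regular representation: a regular finite simple graph whose
full automorphism group is (the image of) `G`, acting semiregularly with exactly `m` orbits. -/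
def HasMGRR (G : Type*) [Group G] (m : ℕ) : Prop :=
  ∃ (V : Type) (_ : Fintype V) (Γ : SimpleGraph V) (ρ : G →* Equiv.Perm V),
    (∃ d : ℕ, ∀ v : V, (Γ.neighborSet v).ncard = d) ∧
    (∀ g : G, IsGraphAut Γ (ρ g)) ∧
    (∀ σ : Equiv.Perm V, IsGraphAut Γ σ → ∃ g : G, ρ g = σ) ∧
    Function.Injective ⇑ρ ∧
    (∀ (g : G) (v : V), ρ g v = v → g = 1) ∧
    (∃ reps : Fin m → V, ∀ v : V, ∃! i : Fin m, ∃ g : G, ρ g (reps i) = v)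

/-- The graph `Δ` on `G × {0,…,m−1}` for a cyclic group `G = ⟨x⟩` and `δ` with
`gcd(1+δ, |G|) = 1`: blocks `G_1`, `G_2` are complete, `G_0`, `G_3` are empty, `G_i` is the
cycle `{g,(xg)}` for `4 ≤ i`; between blocks: `g_0 ~ g'_2` iff `g ≠ g'`; `g_2 ~ g'_3` iff
`g = g'`; `g_3 ~ g'_{m−1}` iff `g ≠ g'`; `g_1 ~ g'_4` iff `g ≠ g'`; `g_ℓ ~ g'_{ℓ+1}` iff
`g ≠ g'` for `4 ≤ ℓ ≤ m−2`; `g_0 ~ g'_3` always; `g_0 ~ g'_1` iff `g'g⁻¹ = x`;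
`g_1 ~ g'_2` iff `g'g⁻¹ = x^δ`. -/
def DeltaCyc (G : Type*) [Group G] (m : ℕ) (x : G) (δ : ℕ) :
    SimpleGraph (G × Fin m) :=
  SimpleGraph.fromRel (fun p q =>
    (p.2.val = 1 ∧ q.2.val = 1 ∧ p.1 ≠ q.1) ∨
    (p.2.val = 2 ∧ q.2.val = 2 ∧ p.1 ≠ q.1) ∨
    (4 ≤ p.2.val ∧ p.2 = q.2 ∧ q.1 = x * p.1) ∨
    (p.2.val = 0 ∧ q.2.val = 2 ∧ p.1 ≠ q.1) ∨
    (p.2.val = 2 ∧ q.2.val = 3 ∧ p.1 = q.1) ∨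
    (p.2.val = 3 ∧ q.2.val = m - 1 ∧ p.1 ≠ q.1) ∨
    (p.2.val = 1 ∧ q.2.val = 4 ∧ p.1 ≠ q.1) ∨
    (4 ≤ p.2.val ∧ p.2.val ≤ m - 2 ∧ q.2.val = p.2.val + 1 ∧ p.1 ≠ q.1) ∨
    (p.2.val = 0 ∧ q.2.val = 3) ∨
    (p.2.val = 0 ∧ q.2.val = 1 ∧ q.1 * p.1⁻¹ = x) ∨
    (p.2.val = 1 ∧ q.2.val = 2 ∧ q.1 * p.1⁻¹ = x ^ δ))

namespace S13

variable {G : Type*} [Group G] {x : G} {m δ : ℕ}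

lemma adj_iff (p q : G × Fin m) :
    (DeltaCyc G m x δ).Adj p q ↔ p ≠ q ∧
    ((fun p q : G × Fin m => (p.2.val = 1 ∧ q.2.val = 1 ∧ p.1 ≠ q.1) ∨
    (p.2.val = 2 ∧ q.2.val = 2 ∧ p.1 ≠ q.1) ∨
    (4 ≤ p.2.val ∧ p.2 = q.2 ∧ q.1 = x * p.1) ∨
    (p.2.val = 0 ∧ q.2.val = 2 ∧ p.1 ≠ q.1) ∨
    (p.2.val = 2 ∧ q.2.val = 3 ∧ p.1 = q.1) ∨
    (p.2.val = 3 ∧ q.2.val = m - 1 ∧ p.1 ≠ q.1) ∨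
    (p.2.val = 1 ∧ q.2.val = 4 ∧ p.1 ≠ q.1) ∨
    (4 ≤ p.2.val ∧ p.2.val ≤ m - 2 ∧ q.2.val = p.2.val + 1 ∧ p.1 ≠ q.1) ∨
    (p.2.val = 0 ∧ q.2.val = 3) ∨
    (p.2.val = 0 ∧ q.2.val = 1 ∧ q.1 * p.1⁻¹ = x) ∨
    (p.2.val = 1 ∧ q.2.val = 2 ∧ q.1 * p.1⁻¹ = x ^ δ)) p q ∨ (fun p q : G × Fin m =>
    (p.2.val = 1 ∧ q.2.val = 1 ∧ p.1 ≠ q.1) ∨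
    (p.2.val = 2 ∧ q.2.val = 2 ∧ p.1 ≠ q.1) ∨
    (4 ≤ p.2.val ∧ p.2 = q.2 ∧ q.1 = x * p.1) ∨
    (p.2.val = 0 ∧ q.2.val = 2 ∧ p.1 ≠ q.1) ∨
    (p.2.val = 2 ∧ q.2.val = 3 ∧ p.1 = q.1) ∨
    (p.2.val = 3 ∧ q.2.val = m - 1 ∧ p.1 ≠ q.1) ∨
    (p.2.val = 1 ∧ q.2.val = 4 ∧ p.1 ≠ q.1) ∨
    (4 ≤ p.2.val ∧ p.2.val ≤ m - 2 ∧ q.2.val = p.2.val + 1 ∧ p.1 ≠ q.1) ∨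
    (p.2.val = 0 ∧ q.2.val = 3) ∨
    (p.2.val = 0 ∧ q.2.val = 1 ∧ q.1 * p.1⁻¹ = x) ∨
    (p.2.val = 1 ∧ q.2.val = 2 ∧ q.1 * p.1⁻¹ = x ^ δ)) q p) :=
  SimpleGraph.fromRel_adj _ p q

set_option maxHeartbeats 1000000

/-- neighbors of a block-0 vertex -/
lemma N0 (hm : 5 ≤ m) (p w : G × Fin m) (hp : p.2.val = 0) :
    (DeltaCyc G m x δ).Adj p w ↔
      (w.2.val = 3 ∨ (w.2.val = 2 ∧ w.1 ≠ p.1) ∨ (w.2.val = 1 ∧ w.1 = x * p.1)) := by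
  rw [adj_iff]
  simp only [ne_eq, Prod.ext_iff, Fin.ext_iff, mul_inv_eq_iff_eq_mul, hp, not_and]
  constructor
  · rintro ⟨hne, h | h⟩ <;>
      rcases h with ⟨h1,h2,h3⟩|⟨h1,h2,h3⟩|⟨h1,h2,h3⟩|⟨h1,h2,h3⟩|⟨h1,h2,h3⟩|⟨h1,h2,h3⟩|
        ⟨h1,h2,h3⟩|⟨h1,h2,h3,h4⟩|⟨h1,h2⟩|⟨h1,h2,h3⟩|⟨h1,h2,h3⟩
    · omega
    · omega
    · omega
    · exact Or.inr (Or.inl ⟨by omega, fun hh => h3 hh.symm⟩)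
    · omega
    · omega
    · omega
    · omega
    · exact Or.inl (by omega)
    · exact Or.inr (Or.inr ⟨by omega, by assumption⟩)
    · omega
    · omega
    · omega
    · omega
    · exact Or.inr (Or.inl ⟨by omega, fun hh => h3 hh⟩)
    · omega
    · omega
    · omega
    · omega
    · omega
    · omega
    · omega
  · rintro (h1 | ⟨h1, h2⟩ | ⟨h1, h2⟩)
    · exact ⟨fun hh => by omega, Or.inl (Or.inr <| Or.inr <| Or.inr <| Or.inr <| Or.inr <|
        Or.inr <| Or.inr <| Or.inr <| Or.inl ⟨trivial, h1⟩)⟩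
    · refine ⟨fun hh => by omega, Or.inl ?_⟩
      exact Or.inr <| Or.inr <| Or.inr <| Or.inl ⟨trivial, h1, fun hh => h2 hh.symm⟩
    · exact ⟨fun hh => by omega, Or.inl (Or.inr <| Or.inr <| Or.inr <| Or.inr <| Or.inr <|
        Or.inr <| Or.inr <| Or.inr <| Or.inr <| Or.inl ⟨trivial, h1, h2⟩)⟩

/-- neighbors of a block-1 vertex -/
lemma N1 (hm : 5 ≤ m) (p w : G × Fin m) (hp : p.2.val = 1) :
    (DeltaCyc G m x δ).Adj p w ↔
      ((w.2.val = 1 ∧ w.1 ≠ p.1) ∨ (w.2.val = 4 ∧ w.1 ≠ p.1) ∨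
       (w.2.val = 0 ∧ p.1 = x * w.1) ∨ (w.2.val = 2 ∧ w.1 = x ^ δ * p.1)) := by
  rw [adj_iff]
  simp only [ne_eq, Prod.ext_iff, Fin.ext_iff, mul_inv_eq_iff_eq_mul, hp, not_and]
  constructor
  · rintro ⟨hne, h | h⟩ <;>
      rcases h with ⟨h1,h2,h3⟩|⟨h1,h2,h3⟩|⟨h1,h2,h3⟩|⟨h1,h2,h3⟩|⟨h1,h2,h3⟩|⟨h1,h2,h3⟩|
        ⟨h1,h2,h3⟩|⟨h1,h2,h3,h4⟩|⟨h1,h2⟩|⟨h1,h2,h3⟩|⟨h1,h2,h3⟩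
    · exact Or.inl ⟨by omega, fun hh => h3 hh.symm⟩
    · omega
    · omega
    · omega
    · omega
    · omega
    · exact Or.inr (Or.inl ⟨by omega, fun hh => h3 hh.symm⟩)
    · omega
    · omega
    · omega
    · exact Or.inr (Or.inr (Or.inr ⟨by omega, by assumption⟩))
    · exact Or.inl ⟨by omega, fun hh => h3 hh⟩
    · omega
    · omega
    · omega
    · omega
    · omega
    · omega
    · omega
    · omega
    · exact Or.inr (Or.inr (Or.inl ⟨by omega, by assumption⟩))
    · omega
  · rintro (⟨h1, h2⟩ | ⟨h1, h2⟩ | ⟨h1, h2⟩ | ⟨h1, h2⟩)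
    · exact ⟨fun hh => (h2 hh.symm).elim,
        Or.inl (Or.inl ⟨trivial, h1, fun hh => h2 hh.symm⟩)⟩
    · exact ⟨fun hh => by omega, Or.inl (Or.inr <| Or.inr <| Or.inr <| Or.inr <| Or.inr <|
        Or.inr <| Or.inl ⟨trivial, h1, fun hh => h2 hh.symm⟩)⟩
    · exact ⟨fun hh => by omega, Or.inr (Or.inr <| Or.inr <| Or.inr <| Or.inr <| Or.inr <|
        Or.inr <| Or.inr <| Or.inr <| Or.inr <| Or.inl ⟨h1, trivial, h2⟩)⟩
    · exact ⟨fun hh => by omega, Or.inl (Or.inr <| Or.inr <| Or.inr <| Or.inr <| Or.inr <|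
        Or.inr <| Or.inr <| Or.inr <| Or.inr <| Or.inr ⟨trivial, h1, h2⟩)⟩

/-- neighbors of a block-2 vertex -/
lemma N2 (hm : 5 ≤ m) (p w : G × Fin m) (hp : p.2.val = 2) :
    (DeltaCyc G m x δ).Adj p w ↔
      ((w.2.val = 2 ∧ w.1 ≠ p.1) ∨ (w.2.val = 0 ∧ w.1 ≠ p.1) ∨
       (w.2.val = 3 ∧ w.1 = p.1) ∨ (w.2.val = 1 ∧ p.1 = x ^ δ * w.1)) := by
  rw [adj_iff]
  simp only [ne_eq, Prod.ext_iff, Fin.ext_iff, mul_inv_eq_iff_eq_mul, hp, not_and]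
  constructor
  · rintro ⟨hne, h | h⟩ <;>
      rcases h with ⟨h1,h2,h3⟩|⟨h1,h2,h3⟩|⟨h1,h2,h3⟩|⟨h1,h2,h3⟩|⟨h1,h2,h3⟩|⟨h1,h2,h3⟩|
        ⟨h1,h2,h3⟩|⟨h1,h2,h3,h4⟩|⟨h1,h2⟩|⟨h1,h2,h3⟩|⟨h1,h2,h3⟩
    · omega
    · exact Or.inl ⟨by omega, fun hh => h3 hh.symm⟩
    · omega
    · omega
    · exact Or.inr (Or.inr (Or.inl ⟨by omega, h3.symm⟩))
    · omega
    · omega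
    · omega
    · omega
    · omega
    · omega
    · omega
    · exact Or.inl ⟨by omega, fun hh => h3 hh⟩
    · omega
    · exact Or.inr (Or.inl ⟨by omega, fun hh => h3 hh⟩)
    · omega
    · omega
    · omega
    · omega
    · omega
    · omega
    · exact Or.inr (Or.inr (Or.inr ⟨by omega, by assumption⟩))
  · rintro (⟨h1, h2⟩ | ⟨h1, h2⟩ | ⟨h1, h2⟩ | ⟨h1, h2⟩)
    · exact ⟨fun hh => (h2 hh.symm).elim,
        Or.inl (Or.inr <| Or.inl ⟨trivial, h1, fun hh => h2 hh.symm⟩)⟩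
    · exact ⟨fun hh => by omega, Or.inr (Or.inr <| Or.inr <| Or.inr <| Or.inl
        ⟨h1, trivial, fun hh => h2 hh⟩)⟩
    · exact ⟨fun hh => by omega, Or.inl (Or.inr <| Or.inr <| Or.inr <| Or.inr <|
        Or.inl ⟨trivial, h1, h2.symm⟩)⟩
    · exact ⟨fun hh => by omega, Or.inr (Or.inr <| Or.inr <| Or.inr <| Or.inr <| Or.inr <|
        Or.inr <| Or.inr <| Or.inr <| Or.inr <| Or.inr ⟨h1, trivial, h2⟩)⟩

/-- neighbors of a block-3 vertex -/
lemma N3 (hm : 5 ≤ m) (p w : G × Fin m) (hp : p.2.val = 3) :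
    (DeltaCyc G m x δ).Adj p w ↔
      (w.2.val = 0 ∨ (w.2.val = m - 1 ∧ w.1 ≠ p.1) ∨ (w.2.val = 2 ∧ w.1 = p.1)) := by
  rw [adj_iff]
  simp only [ne_eq, Prod.ext_iff, Fin.ext_iff, mul_inv_eq_iff_eq_mul, hp, not_and]
  constructor
  · rintro ⟨hne, h | h⟩ <;>
      rcases h with ⟨h1,h2,h3⟩|⟨h1,h2,h3⟩|⟨h1,h2,h3⟩|⟨h1,h2,h3⟩|⟨h1,h2,h3⟩|⟨h1,h2,h3⟩|
        ⟨h1,h2,h3⟩|⟨h1,h2,h3,h4⟩|⟨h1,h2⟩|⟨h1,h2,h3⟩|⟨h1,h2,h3⟩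
    · omega
    · omega
    · omega
    · omega
    · omega
    · exact Or.inr (Or.inl ⟨by omega, fun hh => h3 hh.symm⟩)
    · omega
    · omega
    · omega
    · omega
    · omega
    · omega
    · omega
    · omega
    · omega
    · exact Or.inr (Or.inr ⟨by omega, h3⟩)
    · omega
    · omega
    · omega
    · exact Or.inl (by omega)
    · omega
    · omega
  · rintro (h1 | ⟨h1, h2⟩ | ⟨h1, h2⟩)
    · exact ⟨fun hh => by omega, Or.inr (Or.inr <| Or.inr <| Or.inr <| Or.inr <| Or.inr <|
        Or.inr <| Or.inr <| Or.inr <| Or.inl ⟨h1, trivial⟩)⟩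
    · exact ⟨fun hh => by omega, Or.inl (Or.inr <| Or.inr <| Or.inr <| Or.inr <| Or.inr <|
        Or.inl ⟨trivial, h1, fun hh => h2 hh.symm⟩)⟩
    · exact ⟨fun hh => by omega, Or.inr (Or.inr <| Or.inr <| Or.inr <| Or.inr <|
        Or.inl ⟨h1, trivial, h2⟩)⟩

/-- neighbors of a block-(≥4) vertex -/
lemma N4 (hm : 5 ≤ m) (hx1 : x ≠ 1) (p w : G × Fin m) (hp : 4 ≤ p.2.val) :
    (DeltaCyc G m x δ).Adj p w ↔
      ((w.2.val = p.2.val ∧ (w.1 = x * p.1 ∨ p.1 = x * w.1)) ∨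
       (p.2.val ≤ m - 2 ∧ w.2.val = p.2.val + 1 ∧ w.1 ≠ p.1) ∨
       (5 ≤ p.2.val ∧ w.2.val = p.2.val - 1 ∧ w.1 ≠ p.1) ∨
       (p.2.val = 4 ∧ w.2.val = 1 ∧ w.1 ≠ p.1) ∨
       (p.2.val = m - 1 ∧ w.2.val = 3 ∧ w.1 ≠ p.1)) := by
  rw [adj_iff]
  simp only [ne_eq, Prod.ext_iff, Fin.ext_iff, mul_inv_eq_iff_eq_mul, not_and]
  constructor
  · rintro ⟨hne, h | h⟩ <;>
      rcases h with ⟨h1,h2,h3⟩|⟨h1,h2,h3⟩|⟨h1,h2,h3⟩|⟨h1,h2,h3⟩|⟨h1,h2,h3⟩|⟨h1,h2,h3⟩|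
        ⟨h1,h2,h3⟩|⟨h1,h2,h3,h4⟩|⟨h1,h2⟩|⟨h1,h2,h3⟩|⟨h1,h2,h3⟩
    · omega
    · omega
    · exact Or.inl ⟨by omega, Or.inl h3⟩
    · omega
    · omega
    · omega
    · omega
    · exact Or.inr (Or.inl ⟨by omega, by omega, fun hh => h4 hh.symm⟩)
    · omega
    · omega
    · omega
    · omega
    · omega
    · exact Or.inl ⟨by omega, Or.inr h3⟩
    · omega
    · omega
    · exact Or.inr (Or.inr (Or.inr (Or.inr ⟨by omega, by omega, fun hh => h3 hh⟩)))
    · exact Or.inr (Or.inr (Or.inr (Or.inl ⟨by omega, by omega, fun hh => h3 hh⟩)))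
    · exact Or.inr (Or.inr (Or.inl ⟨by omega, by omega, fun hh => h4 hh⟩))
    · omega
    · omega
    · omega
  · rintro (⟨h1, h2 | h2⟩ | ⟨h1, h2, h3⟩ | ⟨h1, h2, h3⟩ | ⟨h1, h2, h3⟩ | ⟨h1, h2, h3⟩)
    · refine ⟨fun hh => absurd ?_ hx1, Or.inl (Or.inr <| Or.inr <| Or.inl
        ⟨hp, by omega, h2⟩)⟩
      have := (hh.trans h2).symm
      rwa [mul_eq_right] at this
    · refine ⟨fun hh => absurd ?_ hx1, Or.inr (Or.inr <| Or.inr <| Or.inl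
        ⟨by omega, by omega, h2⟩)⟩
      have := (hh.symm.trans h2).symm
      rwa [mul_eq_right] at this
    · exact ⟨fun hh => by omega, Or.inl (Or.inr <| Or.inr <| Or.inr <| Or.inr <| Or.inr <|
        Or.inr <| Or.inr <| Or.inl ⟨hp, h1, h2, fun hh => h3 hh.symm⟩)⟩
    · exact ⟨fun hh => by omega, Or.inr (Or.inr <| Or.inr <| Or.inr <| Or.inr <| Or.inr <|
        Or.inr <| Or.inr <| Or.inl ⟨by omega, by omega, by omega, fun hh => h3 hh⟩)⟩
    · exact ⟨fun hh => by omega, Or.inr (Or.inr <| Or.inr <| Or.inr <| Or.inr <| Or.inr <|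
        Or.inr <| Or.inl ⟨h2, by omega, fun hh => h3 hh⟩)⟩
    · exact ⟨fun hh => by omega, Or.inr (Or.inr <| Or.inr <| Or.inr <| Or.inr <| Or.inr <|
        Or.inl ⟨h2, by omega, fun hh => h3 hh⟩)⟩

/-- blocks that can see block 1 -/
lemma M1 (p w : G × Fin m) (hp : p.2.val = 1) (h : (DeltaCyc G m x δ).Adj w p) :
    w.2.val = 1 ∨ w.2.val = 4 ∨ w.2.val = 0 ∨ w.2.val = 2 := by
  rw [adj_iff] at h
  obtain ⟨-, h | h⟩ := h <;>
    rcases h with ⟨h1,h2,h3⟩|⟨h1,h2,h3⟩|⟨h1,h2,h3⟩|⟨h1,h2,h3⟩|⟨h1,h2,h3⟩|⟨h1,h2,h3⟩|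
      ⟨h1,h2,h3⟩|⟨h1,h2,h3,h4⟩|⟨h1,h2⟩|⟨h1,h2,h3⟩|⟨h1,h2,h3⟩ <;>
    first
      | omega
      | (rw [Fin.ext_iff] at h2; omega)

/-- blocks that can see block ℓ for 4 ≤ ℓ ≤ m - 2 -/
lemma M2 (hm : 5 ≤ m) (p w : G × Fin m) (hp4 : 4 ≤ p.2.val) (hp2 : p.2.val ≤ m - 2)
    (h : (DeltaCyc G m x δ).Adj w p) :
    w.2.val = p.2.val ∨ w.2.val = p.2.val + 1 ∨ (5 ≤ p.2.val ∧ w.2.val = p.2.val - 1) ∨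
      (p.2.val = 4 ∧ w.2.val = 1) := by
  rw [adj_iff] at h
  obtain ⟨-, h | h⟩ := h <;>
    rcases h with ⟨h1,h2,h3⟩|⟨h1,h2,h3⟩|⟨h1,h2,h3⟩|⟨h1,h2,h3⟩|⟨h1,h2,h3⟩|⟨h1,h2,h3⟩|
      ⟨h1,h2,h3⟩|⟨h1,h2,h3,h4⟩|⟨h1,h2⟩|⟨h1,h2,h3⟩|⟨h1,h2,h3⟩ <;>
    first
      | omega
      | (rw [Fin.ext_iff] at h2; omega)


/-- there is always a third element -/
lemma hthird (hn : 3 ≤ Nat.card G) (a b : G) : ∃ c : G, c ≠ a ∧ c ≠ b := by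
  by_contra hc
  push_neg at hc
  have hsub : (Set.univ : Set G) ⊆ {a, b} := by
    intro c _
    rcases Classical.em (c = a) with h | h
    · exact Or.inl h
    · exact Or.inr (hc c h)
  have h1 : (Set.univ : Set G).ncard ≤ ({a, b} : Set G).ncard :=
    Set.ncard_le_ncard hsub (Set.toFinite _)
  have h2 : ({a, b} : Set G).ncard ≤ 2 := by
    have := Set.ncard_insert_le a ({b} : Set G)
    simpa using this
  rw [Set.ncard_univ] at h1
  omega

section Facts
variable [Finite G]

lemma horder (hx : Subgroup.zpowers x = ⊤) : orderOf x = Nat.card G := by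
  rw [← Nat.card_zpowers, hx]
  exact Subgroup.card_top

lemma hx1 (hx : Subgroup.zpowers x = ⊤) (hn : 3 ≤ Nat.card G) : x ≠ 1 := by
  intro h
  have := horder hx
  rw [h, orderOf_one] at this
  omega

lemma hxx (hx : Subgroup.zpowers x = ⊤) (hn : 3 ≤ Nat.card G) : x * x ≠ 1 := by
  intro h
  have h2 : x ^ 2 = 1 := by rw [pow_two]; exact h
  have := orderOf_dvd_of_pow_eq_one h2
  rw [horder hx] at this
  have := Nat.le_of_dvd (by omega) this
  omega

lemma hxd (hx : Subgroup.zpowers x = ⊤) (hn : 3 ≤ Nat.card G)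
    (hgcd : Nat.gcd (1 + δ) (Nat.card G) = 1) : x ^ (1 + δ) ≠ 1 := by
  intro h
  have hdvd : orderOf x ∣ 1 + δ := orderOf_dvd_of_pow_eq_one h
  rw [horder hx] at hdvd
  have : Nat.card G ∣ Nat.gcd (1 + δ) (Nat.card G) := Nat.dvd_gcd hdvd dvd_rfl
  rw [hgcd] at this
  have := Nat.le_of_dvd (by omega) this
  omega

lemma hxd' (hx : Subgroup.zpowers x = ⊤) (hn : 3 ≤ Nat.card G)
    (hgcd : Nat.gcd (1 + δ) (Nat.card G) = 1) : x ^ δ * x ≠ 1 := by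
  have := hxd hx hn hgcd
  rwa [Nat.add_comm, pow_succ] at this

lemma hgen (hx : Subgroup.zpowers x = ⊤) (hn : 3 ≤ Nat.card G)
    (hgcd : Nat.gcd (1 + δ) (Nat.card G) = 1) (g : G) :
    ∃ k : ℕ, (x ^ (1 + δ)) ^ k = g := by
  have hco : Nat.Coprime (orderOf x) (1 + δ) := by
    rw [horder hx]
    exact Nat.coprime_comm.mp hgcd
  have hord : orderOf (x ^ (1 + δ)) = Nat.card G := by
    rw [orderOf_pow, Nat.Coprime.gcd_eq_one hco, Nat.div_one, horder hx]
  have htop : Subgroup.zpowers (x ^ (1 + δ)) = ⊤ := by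
    apply Subgroup.eq_top_of_card_eq
    rw [Nat.card_zpowers, hord]
  have hmem : g ∈ Submonoid.powers (x ^ (1 + δ)) := by
    rw [mem_powers_iff_mem_zpowers, htop]
    trivial
  obtain ⟨k, hk⟩ := hmem
  exact ⟨k, hk⟩

end Facts

section Key
variable [Finite G]

/-- a 0-3 matching pair has no common neighbour -/
lemma K1 (hm : 5 ≤ m) (p q w : G × Fin m) (hp : p.2.val = 0) (hq : q.2.val = 3) (hpq : p.1 = q.1) :
    ¬((DeltaCyc G m x δ).Adj p w ∧ (DeltaCyc G m x δ).Adj q w) := by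
  rintro ⟨a, b⟩
  rw [N0 hm p w hp] at a
  rw [N3 hm q w hq] at b
  rcases a with a | ⟨a1, a2⟩ | ⟨a1, a2⟩ <;> rcases b with b | ⟨b1, b2⟩ | ⟨b1, b2⟩ <;>
    first
      | omega
      | exact a2 (b2.trans hpq.symm)

/-- every edge which is not a 0-3 matching pair has a common neighbour -/
lemma K2 (hm : 5 ≤ m) (hx : Subgroup.zpowers x = ⊤) (hn : 3 ≤ Nat.card G)
    (hgcd : Nat.gcd (1 + δ) (Nat.card G) = 1) (p q : G × Fin m) (h : (DeltaCyc G m x δ).Adj p q) :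
    (p.1 = q.1 ∧ ((p.2.val = 0 ∧ q.2.val = 3) ∨ (p.2.val = 3 ∧ q.2.val = 0))) ∨
      ∃ w, (DeltaCyc G m x δ).Adj p w ∧ (DeltaCyc G m x δ).Adj q w := by
  have hx1' : x ≠ 1 := hx1 hx hn
  have hxx' : x * x ≠ 1 := hxx hx hn
  have hxd2 : x ^ δ * x ≠ 1 := hxd' hx hn hgcd
  have hpm : p.2.val < m := p.2.isLt
  have hqm : q.2.val < m := q.2.isLt
  rw [adj_iff] at h
  obtain ⟨hne, h | h⟩ := h <;>
    rcases h with ⟨h1,h2,h3⟩|⟨h1,h2,h3⟩|⟨h1,h2,h3⟩|⟨h1,h2,h3⟩|⟨h1,h2,h3⟩|⟨h1,h2,h3⟩|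
      ⟨h1,h2,h3⟩|⟨h1,h2,h3,h4⟩|⟨h1,h2⟩|⟨h1,h2,h3⟩|⟨h1,h2,h3⟩
  -- p side
  · obtain ⟨c, hca, hcb⟩ := hthird hn p.1 q.1
    exact Or.inr ⟨(c, ⟨4, by omega⟩), (N1 hm p _ h1).mpr (Or.inr (Or.inl ⟨rfl, hca⟩)),
      (N1 hm q _ h2).mpr (Or.inr (Or.inl ⟨rfl, hcb⟩))⟩
  · obtain ⟨c, hca, hcb⟩ := hthird hn p.1 q.1
    exact Or.inr ⟨(c, ⟨0, by omega⟩), (N2 hm p _ h1).mpr (Or.inr (Or.inl ⟨rfl, hca⟩)),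
      (N2 hm q _ h2).mpr (Or.inr (Or.inl ⟨rfl, hcb⟩))⟩
  · obtain ⟨c, hca, hcb⟩ := hthird hn p.1 q.1
    have hval : q.2.val = p.2.val := by rw [h2]
    by_cases hc : p.2.val ≤ m - 2
    · refine Or.inr ⟨(c, ⟨p.2.val + 1, by omega⟩),
        (N4 hm hx1' p _ h1).mpr (Or.inr (Or.inl ⟨hc, rfl, hca⟩)),
        (N4 hm hx1' q _ (by omega)).mpr (Or.inr (Or.inl ⟨by omega, by
          show p.2.val + 1 = q.2.val + 1; omega, hcb⟩))⟩
    · refine Or.inr ⟨(c, ⟨3, by omega⟩),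
        (N4 hm hx1' p _ h1).mpr (Or.inr <| Or.inr <| Or.inr <| Or.inr ⟨by omega, rfl, hca⟩),
        (N4 hm hx1' q _ (by omega)).mpr
          (Or.inr <| Or.inr <| Or.inr <| Or.inr ⟨by omega, rfl, hcb⟩)⟩
  · exact Or.inr ⟨(q.1, ⟨3, by omega⟩), (N0 hm p _ h1).mpr (Or.inl rfl),
      (N2 hm q _ h2).mpr (Or.inr (Or.inr (Or.inl ⟨rfl, rfl⟩)))⟩
  · obtain ⟨c, hca, hcb⟩ := hthird hn p.1 q.1
    exact Or.inr ⟨(c, ⟨0, by omega⟩), (N2 hm p _ h1).mpr (Or.inr (Or.inl ⟨rfl, hca⟩)),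
      (N3 hm q _ h2).mpr (Or.inl rfl)⟩
  · by_cases hc : x * q.1 = p.1
    · refine Or.inr ⟨(x⁻¹ * q.1, q.2),
        (N3 hm p _ h1).mpr (Or.inr (Or.inl ⟨h2, fun hE => hxx' ?_⟩)),
        (N4 hm hx1' q _ (by omega)).mpr (Or.inl ⟨rfl, Or.inr (mul_inv_cancel_left x q.1).symm⟩)⟩
      have hxe : x * q.1 = x⁻¹ * q.1 := hc.trans hE.symm
      have hxi : x = x⁻¹ := mul_right_cancel hxe
      nth_rewrite 2 [hxi]
      exact mul_inv_cancel x
    · exact Or.inr ⟨(x * q.1, q.2),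
        (N3 hm p _ h1).mpr (Or.inr (Or.inl ⟨h2, hc⟩)),
        (N4 hm hx1' q _ (by omega)).mpr (Or.inl ⟨rfl, Or.inl rfl⟩)⟩
  · obtain ⟨c, hca, hcb⟩ := hthird hn p.1 q.1
    exact Or.inr ⟨(c, ⟨1, by omega⟩), (N1 hm p _ h1).mpr (Or.inl ⟨rfl, hca⟩),
      (N4 hm hx1' q _ (by omega)).mpr
        (Or.inr <| Or.inr <| Or.inr <| Or.inl ⟨h2, rfl, hcb⟩)⟩
  · by_cases hc : x * p.1 = q.1
    · refine Or.inr ⟨(x⁻¹ * p.1, p.2),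
        (N4 hm hx1' p _ h1).mpr (Or.inl ⟨rfl, Or.inr (mul_inv_cancel_left x p.1).symm⟩),
        (N4 hm hx1' q _ (by omega)).mpr (Or.inr <| Or.inr <| Or.inl
          ⟨by omega, by show p.2.val = q.2.val - 1; omega, fun hE => hxx' ?_⟩)⟩
      have hxe : x * p.1 = x⁻¹ * p.1 := hc.trans hE.symm
      have hxi : x = x⁻¹ := mul_right_cancel hxe
      nth_rewrite 2 [hxi]
      exact mul_inv_cancel x
    · exact Or.inr ⟨(x * p.1, p.2),
        (N4 hm hx1' p _ h1).mpr (Or.inl ⟨rfl, Or.inl rfl⟩),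
        (N4 hm hx1' q _ (by omega)).mpr (Or.inr <| Or.inr <| Or.inl
          ⟨by omega, by show p.2.val = q.2.val - 1; omega, hc⟩)⟩
  · by_cases hc : p.1 = q.1
    · exact Or.inl ⟨hc, Or.inl ⟨h1, h2⟩⟩
    · exact Or.inr ⟨(q.1, ⟨2, by omega⟩),
        (N0 hm p _ h1).mpr (Or.inr (Or.inl ⟨rfl, fun hE => hc hE.symm⟩)),
        (N3 hm q _ h2).mpr (Or.inr (Or.inr ⟨rfl, rfl⟩))⟩
  · have hq3 : q.1 = x * p.1 := mul_inv_eq_iff_eq_mul.mp h3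
    refine Or.inr ⟨(x ^ δ * q.1, ⟨2, by omega⟩),
      (N0 hm p _ h1).mpr (Or.inr (Or.inl ⟨rfl, fun hE => hxd2 ?_⟩)),
      (N1 hm q _ h2).mpr (Or.inr <| Or.inr <| Or.inr ⟨rfl, rfl⟩)⟩
    rw [hq3, ← mul_assoc] at hE
    exact mul_eq_right.mp hE
  · have hq3 : q.1 = x ^ δ * p.1 := mul_inv_eq_iff_eq_mul.mp h3
    refine Or.inr ⟨(x⁻¹ * p.1, ⟨0, by omega⟩),
      (N1 hm p _ h1).mpr (Or.inr <| Or.inr <| Or.inl ⟨rfl, (mul_inv_cancel_left x p.1).symm⟩),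
      (N2 hm q _ h2).mpr (Or.inr (Or.inl ⟨rfl, fun hE => hxd2 ?_⟩))⟩
    rw [hq3] at hE
    have hxi : x⁻¹ = x ^ δ := mul_right_cancel hE
    rw [← hxi, inv_mul_cancel]
  -- q side (mirror)
  · obtain ⟨c, hca, hcb⟩ := hthird hn p.1 q.1
    exact Or.inr ⟨(c, ⟨4, by omega⟩), (N1 hm p _ h2).mpr (Or.inr (Or.inl ⟨rfl, hca⟩)),
      (N1 hm q _ h1).mpr (Or.inr (Or.inl ⟨rfl, hcb⟩))⟩
  · obtain ⟨c, hca, hcb⟩ := hthird hn p.1 q.1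
    exact Or.inr ⟨(c, ⟨0, by omega⟩), (N2 hm p _ h2).mpr (Or.inr (Or.inl ⟨rfl, hca⟩)),
      (N2 hm q _ h1).mpr (Or.inr (Or.inl ⟨rfl, hcb⟩))⟩
  · obtain ⟨c, hca, hcb⟩ := hthird hn p.1 q.1
    have hval : q.2.val = p.2.val := by rw [h2]
    by_cases hc : p.2.val ≤ m - 2
    · refine Or.inr ⟨(c, ⟨p.2.val + 1, by omega⟩),
        (N4 hm hx1' p _ (by omega)).mpr (Or.inr (Or.inl ⟨hc, rfl, hca⟩)),
        (N4 hm hx1' q _ (by omega)).mpr (Or.inr (Or.inl ⟨by omega, by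
          show p.2.val + 1 = q.2.val + 1; omega, hcb⟩))⟩
    · refine Or.inr ⟨(c, ⟨3, by omega⟩),
        (N4 hm hx1' p _ (by omega)).mpr
          (Or.inr <| Or.inr <| Or.inr <| Or.inr ⟨by omega, rfl, hca⟩),
        (N4 hm hx1' q _ (by omega)).mpr
          (Or.inr <| Or.inr <| Or.inr <| Or.inr ⟨by omega, rfl, hcb⟩)⟩
  · exact Or.inr ⟨(p.1, ⟨3, by omega⟩), (N2 hm p _ h2).mpr (Or.inr (Or.inr (Or.inl ⟨rfl, rfl⟩))),
      (N0 hm q _ h1).mpr (Or.inl rfl)⟩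
  · obtain ⟨c, hca, hcb⟩ := hthird hn p.1 q.1
    exact Or.inr ⟨(c, ⟨0, by omega⟩), (N3 hm p _ h2).mpr (Or.inl rfl),
      (N2 hm q _ h1).mpr (Or.inr (Or.inl ⟨rfl, hcb⟩))⟩
  · by_cases hc : x * p.1 = q.1
    · refine Or.inr ⟨(x⁻¹ * p.1, p.2),
        (N4 hm hx1' p _ (by omega)).mpr (Or.inl ⟨rfl, Or.inr (mul_inv_cancel_left x p.1).symm⟩),
        (N3 hm q _ h1).mpr (Or.inr (Or.inl ⟨h2, fun hE => hxx' ?_⟩))⟩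
      have hxe : x * p.1 = x⁻¹ * p.1 := hc.trans hE.symm
      have hxi : x = x⁻¹ := mul_right_cancel hxe
      nth_rewrite 2 [hxi]
      exact mul_inv_cancel x
    · exact Or.inr ⟨(x * p.1, p.2),
        (N4 hm hx1' p _ (by omega)).mpr (Or.inl ⟨rfl, Or.inl rfl⟩),
        (N3 hm q _ h1).mpr (Or.inr (Or.inl ⟨h2, hc⟩))⟩
  · obtain ⟨c, hca, hcb⟩ := hthird hn p.1 q.1
    exact Or.inr ⟨(c, ⟨1, by omega⟩),
      (N4 hm hx1' p _ (by omega)).mpr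
        (Or.inr <| Or.inr <| Or.inr <| Or.inl ⟨h2, rfl, hca⟩),
      (N1 hm q _ h1).mpr (Or.inl ⟨rfl, hcb⟩)⟩
  · by_cases hc : x * q.1 = p.1
    · refine Or.inr ⟨(x⁻¹ * q.1, q.2),
        (N4 hm hx1' p _ (by omega)).mpr (Or.inr <| Or.inr <| Or.inl
          ⟨by omega, by show q.2.val = p.2.val - 1; omega, fun hE => hxx' ?_⟩),
        (N4 hm hx1' q _ h1).mpr (Or.inl ⟨rfl, Or.inr (mul_inv_cancel_left x q.1).symm⟩)⟩
      have hxe : x * q.1 = x⁻¹ * q.1 := hc.trans hE.symm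
      have hxi : x = x⁻¹ := mul_right_cancel hxe
      nth_rewrite 2 [hxi]
      exact mul_inv_cancel x
    · exact Or.inr ⟨(x * q.1, q.2),
        (N4 hm hx1' p _ (by omega)).mpr (Or.inr <| Or.inr <| Or.inl
          ⟨by omega, by show q.2.val = p.2.val - 1; omega, hc⟩),
        (N4 hm hx1' q _ h1).mpr (Or.inl ⟨rfl, Or.inl rfl⟩)⟩
  · by_cases hc : p.1 = q.1
    · exact Or.inl ⟨hc, Or.inr ⟨h2, h1⟩⟩
    · exact Or.inr ⟨(p.1, ⟨2, by omega⟩),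
        (N3 hm p _ h2).mpr (Or.inr (Or.inr ⟨rfl, rfl⟩)),
        (N0 hm q _ h1).mpr (Or.inr (Or.inl ⟨rfl, fun hE => hc hE⟩))⟩
  · have hq3 : p.1 = x * q.1 := mul_inv_eq_iff_eq_mul.mp h3
    refine Or.inr ⟨(x ^ δ * p.1, ⟨2, by omega⟩),
      (N1 hm p _ h2).mpr (Or.inr <| Or.inr <| Or.inr ⟨rfl, rfl⟩),
      (N0 hm q _ h1).mpr (Or.inr (Or.inl ⟨rfl, fun hE => hxd2 ?_⟩))⟩
    rw [hq3, ← mul_assoc] at hE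
    exact mul_eq_right.mp hE
  · have hq3 : p.1 = x ^ δ * q.1 := mul_inv_eq_iff_eq_mul.mp h3
    refine Or.inr ⟨(x⁻¹ * q.1, ⟨0, by omega⟩),
      (N2 hm p _ h2).mpr (Or.inr (Or.inl ⟨rfl, fun hE => hxd2 ?_⟩)),
      (N1 hm q _ h1).mpr (Or.inr <| Or.inr <| Or.inl ⟨rfl, (mul_inv_cancel_left x q.1).symm⟩)⟩
    rw [hq3] at hE
    have hxi : x⁻¹ = x ^ δ := mul_right_cancel hE
    rw [← hxi, inv_mul_cancel]

/-- characterisation of edges with no common neighbour -/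
lemma rpair_iff (hm : 5 ≤ m) (hx : Subgroup.zpowers x = ⊤) (hn : 3 ≤ Nat.card G)
    (hgcd : Nat.gcd (1 + δ) (Nat.card G) = 1) (p q : G × Fin m) :
    ((DeltaCyc G m x δ).Adj p q ∧
        ∀ w, ¬((DeltaCyc G m x δ).Adj p w ∧ (DeltaCyc G m x δ).Adj q w)) ↔
      (p.1 = q.1 ∧ ((p.2.val = 0 ∧ q.2.val = 3) ∨ (p.2.val = 3 ∧ q.2.val = 0))) := by
  constructor
  · rintro ⟨hadj, hcom⟩
    rcases K2 hm hx hn hgcd p q hadj with h | ⟨w, hw⟩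
    · exact h
    · exact absurd hw (hcom w)
  · rintro ⟨h1, ⟨h2, h3⟩ | ⟨h2, h3⟩⟩
    · refine ⟨(N0 hm p q h2).mpr (Or.inl h3), fun w => K1 hm p q w h2 h3 h1⟩
    · refine ⟨((N0 hm q p h3).mpr (Or.inl h2)).symm, fun w hw =>
        K1 hm q p w h3 h2 h1.symm ⟨hw.2, hw.1⟩⟩

end Key

section Aut
variable [Finite G]

lemma aut_symm (σ : Equiv.Perm (G × Fin m)) (hσ : IsGraphAut (DeltaCyc G m x δ) σ) :
    IsGraphAut (DeltaCyc G m x δ) σ.symm := by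
  intro u v
  have := hσ (σ.symm u) (σ.symm v)
  rw [Equiv.apply_symm_apply, Equiv.apply_symm_apply] at this
  exact this.symm

lemma rp_pres (σ : Equiv.Perm (G × Fin m)) (hσ : IsGraphAut (DeltaCyc G m x δ) σ)
    (p q : G × Fin m)
    (h : (DeltaCyc G m x δ).Adj p q ∧
      ∀ w, ¬((DeltaCyc G m x δ).Adj p w ∧ (DeltaCyc G m x δ).Adj q w)) :
    (DeltaCyc G m x δ).Adj (σ p) (σ q) ∧
      ∀ w, ¬((DeltaCyc G m x δ).Adj (σ p) w ∧ (DeltaCyc G m x δ).Adj (σ q) w) := by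
  refine ⟨(hσ p q).mpr h.1, fun w hw => h.2 (σ.symm w) ⟨?_, ?_⟩⟩
  · have := hw.1
    rw [← Equiv.apply_symm_apply σ w] at this
    exact (hσ p (σ.symm w)).mp this
  · have := hw.2
    rw [← Equiv.apply_symm_apply σ w] at this
    exact (hσ q (σ.symm w)).mp this

/-- the union of blocks 0 and 3 is invariant -/
lemma sS (hm : 5 ≤ m) (hx : Subgroup.zpowers x = ⊤) (hn : 3 ≤ Nat.card G)
    (hgcd : Nat.gcd (1 + δ) (Nat.card G) = 1)
    (σ : Equiv.Perm (G × Fin m)) (hσ : IsGraphAut (DeltaCyc G m x δ) σ)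
    (p : G × Fin m) (hp : p.2.val = 0 ∨ p.2.val = 3) :
    (σ p).2.val = 0 ∨ (σ p).2.val = 3 := by
  rcases hp with hp | hp
  · have h := (rpair_iff hm hx hn hgcd p (p.1, ⟨3, by omega⟩)).mpr ⟨rfl, Or.inl ⟨hp, rfl⟩⟩
    have h2 := (rpair_iff hm hx hn hgcd _ _).mp (rp_pres σ hσ _ _ h)
    rcases h2.2 with ⟨h3, _⟩ | ⟨h3, _⟩
    · exact Or.inl h3
    · exact Or.inr h3
  · have h := (rpair_iff hm hx hn hgcd p (p.1, ⟨0, by omega⟩)).mpr ⟨rfl, Or.inr ⟨hp, rfl⟩⟩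
    have h2 := (rpair_iff hm hx hn hgcd _ _).mp (rp_pres σ hσ _ _ h)
    rcases h2.2 with ⟨h3, _⟩ | ⟨h3, _⟩
    · exact Or.inl h3
    · exact Or.inr h3

/-- witnesses for the property distinguishing block 3 from block 0 -/
lemma I3 (hm : 5 ≤ m) (p u : G × Fin m) (hp : p.2.val = 3)
    (hadj : (DeltaCyc G m x δ).Adj p u) (hu : ¬(u.2.val = 0 ∨ u.2.val = 3)) :
    ¬(DeltaCyc G m x δ).Adj (p.1, (⟨2, by omega⟩ : Fin m)) u := by
  intro hA
  rw [N3 hm p u hp] at hadj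
  rw [N2 hm _ u rfl] at hA
  rcases hadj with a | ⟨a1, a2⟩ | ⟨a1, a2⟩ <;>
    rcases hA with ⟨b1, b2⟩ | ⟨b1, b2⟩ | ⟨b1, b2⟩ | ⟨b1, b2⟩ <;>
    first
      | omega
      | exact hu (Or.inl a)
      | exact hu (Or.inr a1)
      | exact b2 a2

/-- no block-0 vertex has the block-3 distinguishing property -/
lemma notI0 (hm : 5 ≤ m) (hx : Subgroup.zpowers x = ⊤) (hn : 3 ≤ Nat.card G)
    (hgcd : Nat.gcd (1 + δ) (Nat.card G) = 1) (p w : G × Fin m) (hp : p.2.val = 0)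
    (h1 : (DeltaCyc G m x δ).Adj p w) (h2 : ¬(w.2.val = 0 ∨ w.2.val = 3)) :
    ∃ u, (DeltaCyc G m x δ).Adj p u ∧ ¬(u.2.val = 0 ∨ u.2.val = 3) ∧
      (DeltaCyc G m x δ).Adj w u := by
  have hxd2 : x ^ δ * x ≠ 1 := hxd' hx hn hgcd
  rw [N0 hm p w hp] at h1
  rcases h1 with a | ⟨a1, a2⟩ | ⟨a1, a2⟩
  · exact absurd (Or.inr a) h2
  · obtain ⟨c, hca, hcb⟩ := hthird hn p.1 w.1
    refine ⟨(c, ⟨2, by omega⟩), (N0 hm p _ hp).mpr (Or.inr (Or.inl ⟨rfl, hca⟩)),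
      by show ¬((2:ℕ) = 0 ∨ (2:ℕ) = 3); omega, (N2 hm w _ a1).mpr (Or.inl ⟨rfl, hcb⟩)⟩
  · refine ⟨(x ^ δ * w.1, ⟨2, by omega⟩),
      (N0 hm p _ hp).mpr (Or.inr (Or.inl ⟨rfl, fun hE => hxd2 ?_⟩)),
      by show ¬((2:ℕ) = 0 ∨ (2:ℕ) = 3); omega,
      (N1 hm w _ a1).mpr (Or.inr <| Or.inr <| Or.inr ⟨rfl, rfl⟩)⟩
    rw [a2, ← mul_assoc] at hE
    exact mul_eq_right.mp hE

/-- the unique witness for the block-3 property is the block-2 partner -/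
lemma Wuniq (hm : 5 ≤ m) (hx : Subgroup.zpowers x = ⊤) (hn : 3 ≤ Nat.card G)
    (p w : G × Fin m) (hp : p.2.val = 3)
    (hadj : (DeltaCyc G m x δ).Adj p w) (hS : ¬(w.2.val = 0 ∨ w.2.val = 3))
    (huniq : ∀ u, (DeltaCyc G m x δ).Adj p u → ¬(u.2.val = 0 ∨ u.2.val = 3) →
      ¬(DeltaCyc G m x δ).Adj w u) :
    w = (p.1, (⟨2, by omega⟩ : Fin m)) := by
  have hx1' : x ≠ 1 := hx1 hx hn
  have hxx' : x * x ≠ 1 := hxx hx hn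
  rw [N3 hm p w hp] at hadj
  rcases hadj with a | ⟨a1, a2⟩ | ⟨a1, a2⟩
  · exact absurd (Or.inl a) hS
  · exfalso
    by_cases hc : x * w.1 = p.1
    · refine huniq (x⁻¹ * w.1, w.2) ((N3 hm p _ hp).mpr (Or.inr (Or.inl
        ⟨a1, fun hE => hxx' ?_⟩)))
        (by show ¬(w.2.val = 0 ∨ w.2.val = 3); omega)
        ((N4 hm hx1' w _ (by omega)).mpr
          (Or.inl ⟨rfl, Or.inr (mul_inv_cancel_left x w.1).symm⟩))
      have hxe : x * w.1 = x⁻¹ * w.1 := hc.trans hE.symm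
      have hxi : x = x⁻¹ := mul_right_cancel hxe
      nth_rewrite 2 [hxi]
      exact mul_inv_cancel x
    · exact huniq (x * w.1, w.2) ((N3 hm p _ hp).mpr (Or.inr (Or.inl ⟨a1, hc⟩)))
        (by show ¬(w.2.val = 0 ∨ w.2.val = 3); omega)
        ((N4 hm hx1' w _ (by omega)).mpr (Or.inl ⟨rfl, Or.inl rfl⟩))
  · obtain ⟨w1, w2⟩ := w
    simp only [Prod.mk.injEq]
    exact ⟨a2, Fin.ext (by simpa using a1)⟩

/-- the unique neighbour of a block-0 vertex outside blocks 0,2,3 -/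
lemma Uuniq (hm : 5 ≤ m) (p w : G × Fin m) (hp : p.2.val = 0) :
    ((DeltaCyc G m x δ).Adj p w ∧ w.2.val ≠ 0 ∧ w.2.val ≠ 3 ∧ w.2.val ≠ 2) ↔
      w = (x * p.1, (⟨1, by omega⟩ : Fin m)) := by
  constructor
  · rintro ⟨hadj, hw0, hw3, hw2⟩
    rw [N0 hm p w hp] at hadj
    rcases hadj with a | ⟨a1, a2⟩ | ⟨a1, a2⟩
    · omega
    · omega
    · obtain ⟨w1, w2⟩ := w
      simp only [Prod.mk.injEq]
      exact ⟨a2, Fin.ext (by simpa using a1)⟩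
  · rintro rfl
    exact ⟨(N0 hm p _ hp).mpr (Or.inr (Or.inr ⟨rfl, rfl⟩)),
      by show (1:ℕ) ≠ 0; omega, by show (1:ℕ) ≠ 3; omega, by show (1:ℕ) ≠ 2; omega⟩

/-- the unique block-2 neighbour of a block-1 vertex -/
lemma V2uniq (hm : 5 ≤ m) (p w : G × Fin m) (hp : p.2.val = 1) :
    ((DeltaCyc G m x δ).Adj p w ∧ w.2.val = 2) ↔
      w = (x ^ δ * p.1, (⟨2, by omega⟩ : Fin m)) := by
  constructor
  · rintro ⟨hadj, hw2⟩
    rw [N1 hm p w hp] at hadj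
    rcases hadj with ⟨a1, a2⟩ | ⟨a1, a2⟩ | ⟨a1, a2⟩ | ⟨a1, a2⟩
    · omega
    · omega
    · omega
    · obtain ⟨w1, w2⟩ := w
      simp only [Prod.mk.injEq]
      exact ⟨a2, Fin.ext (by simpa using a1)⟩
  · rintro rfl
    exact ⟨(N1 hm p _ hp).mpr (Or.inr <| Or.inr <| Or.inr ⟨rfl, rfl⟩), rfl⟩

end Aut

section Blocks
variable [Finite G]

lemma adj_pull (σ : Equiv.Perm (G × Fin m)) (hσ : IsGraphAut (DeltaCyc G m x δ) σ)
    (p : G × Fin m) (u : G × Fin m) (h : (DeltaCyc G m x δ).Adj (σ p) u) :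
    (DeltaCyc G m x δ).Adj p (σ.symm u) := by
  have := (aut_symm σ hσ (σ p) u).mpr h
  rwa [Equiv.symm_apply_apply] at this

lemma sS' (hm : 5 ≤ m) (hx : Subgroup.zpowers x = ⊤) (hn : 3 ≤ Nat.card G)
    (hgcd : Nat.gcd (1 + δ) (Nat.card G) = 1)
    (σ : Equiv.Perm (G × Fin m)) (hσ : IsGraphAut (DeltaCyc G m x δ) σ)
    (p : G × Fin m) (hp : ¬(p.2.val = 0 ∨ p.2.val = 3)) :
    ¬((σ p).2.val = 0 ∨ (σ p).2.val = 3) := by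
  intro h
  apply hp
  have := sS hm hx hn hgcd σ.symm (aut_symm σ hσ) (σ p) h
  rwa [Equiv.symm_apply_apply] at this

lemma blk3 (hm : 5 ≤ m) (hx : Subgroup.zpowers x = ⊤) (hn : 3 ≤ Nat.card G)
    (hgcd : Nat.gcd (1 + δ) (Nat.card G) = 1)
    (σ : Equiv.Perm (G × Fin m)) (hσ : IsGraphAut (DeltaCyc G m x δ) σ)
    (p : G × Fin m) (hp : p.2.val = 3) : (σ p).2.val = 3 := by
  rcases sS hm hx hn hgcd σ hσ p (Or.inr hp) with h0 | h3
  · exfalso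
    have hadj : (DeltaCyc G m x δ).Adj p (p.1, (⟨2, by omega⟩ : Fin m)) :=
      (N3 hm p _ hp).mpr (Or.inr (Or.inr ⟨rfl, rfl⟩))
    have hadj' := (hσ p _).mpr hadj
    have hw'S : ¬((σ (p.1, (⟨2, by omega⟩ : Fin m))).2.val = 0 ∨
        (σ (p.1, (⟨2, by omega⟩ : Fin m))).2.val = 3) :=
      sS' hm hx hn hgcd σ hσ _ (by show ¬((2:ℕ) = 0 ∨ (2:ℕ) = 3); omega)
    obtain ⟨u, hu1, hu2, hu3⟩ := notI0 hm hx hn hgcd (σ p) _ h0 hadj' hw'S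
    have hu1' := adj_pull σ hσ p u hu1
    have hu2' : ¬((σ.symm u).2.val = 0 ∨ (σ.symm u).2.val = 3) := by
      intro hmem
      apply hu2
      have := sS hm hx hn hgcd σ hσ _ hmem
      rwa [Equiv.apply_symm_apply] at this
    exact I3 hm p (σ.symm u) hp hu1' hu2'
      (adj_pull σ hσ (p.1, (⟨2, by omega⟩ : Fin m)) u hu3)
  · exact h3

lemma blk0 (hm : 5 ≤ m) (hx : Subgroup.zpowers x = ⊤) (hn : 3 ≤ Nat.card G)
    (hgcd : Nat.gcd (1 + δ) (Nat.card G) = 1)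
    (σ : Equiv.Perm (G × Fin m)) (hσ : IsGraphAut (DeltaCyc G m x δ) σ) (g : G) :
    σ (g, (⟨0, by omega⟩ : Fin m)) =
      ((σ (g, (⟨3, by omega⟩ : Fin m))).1, (⟨0, by omega⟩ : Fin m)) := by
  have h := (rpair_iff hm hx hn hgcd (g, (⟨0, by omega⟩ : Fin m))
    (g, (⟨3, by omega⟩ : Fin m))).mpr ⟨rfl, Or.inl ⟨rfl, rfl⟩⟩
  have h2 := (rpair_iff hm hx hn hgcd _ _).mp (rp_pres σ hσ _ _ h)
  have h3 := blk3 hm hx hn hgcd σ hσ (g, (⟨3, by omega⟩ : Fin m)) rfl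
  rcases h2.2 with ⟨ha, hb⟩ | ⟨ha, hb⟩
  · exact Prod.ext h2.1 (Fin.ext (by rw [ha]))
  · omega

lemma blk2 (hm : 5 ≤ m) (hx : Subgroup.zpowers x = ⊤) (hn : 3 ≤ Nat.card G)
    (hgcd : Nat.gcd (1 + δ) (Nat.card G) = 1)
    (σ : Equiv.Perm (G × Fin m)) (hσ : IsGraphAut (DeltaCyc G m x δ) σ) (g : G) :
    σ (g, (⟨2, by omega⟩ : Fin m)) =
      ((σ (g, (⟨3, by omega⟩ : Fin m))).1, (⟨2, by omega⟩ : Fin m)) := by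
  have h3 := blk3 hm hx hn hgcd σ hσ (g, (⟨3, by omega⟩ : Fin m)) rfl
  refine Wuniq (δ := δ) hm hx hn (σ (g, (⟨3, by omega⟩ : Fin m))) (σ (g, (⟨2, by omega⟩ : Fin m)))
    h3 ?_ ?_ ?_
  · exact (hσ _ _).mpr ((N3 hm _ _ rfl).mpr (Or.inr (Or.inr ⟨rfl, rfl⟩)))
  · exact sS' hm hx hn hgcd σ hσ _ (by show ¬((2:ℕ) = 0 ∨ (2:ℕ) = 3); omega)
  · intro u h1 h2
    intro hA
    have h1' := adj_pull σ hσ _ u h1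
    have h2' : ¬((σ.symm u).2.val = 0 ∨ (σ.symm u).2.val = 3) := by
      intro hmem
      apply h2
      have := sS hm hx hn hgcd σ hσ _ hmem
      rwa [Equiv.apply_symm_apply] at this
    exact I3 hm (g, (⟨3, by omega⟩ : Fin m)) (σ.symm u) rfl h1' h2'
      (adj_pull σ hσ _ u hA)

end Blocks

section Rigid
variable [Finite G]

theorem rigid (hm : 5 ≤ m) (hx : Subgroup.zpowers x = ⊤) (hn : 3 ≤ Nat.card G)
    (hgcd : Nat.gcd (1 + δ) (Nat.card G) = 1)
    (σ : Equiv.Perm (G × Fin m)) (hσ : IsGraphAut (DeltaCyc G m x δ) σ) :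
    ∃ a : G, ∀ p : G × Fin m, σ p = (p.1 * a, p.2) := by
  have hx1' : x ≠ 1 := hx1 hx hn
  have hσ' := aut_symm σ hσ
  have E3 : ∀ g : G, σ (g, (⟨3, by omega⟩ : Fin m)) =
      ((σ (g, (⟨3, by omega⟩ : Fin m))).1, (⟨3, by omega⟩ : Fin m)) :=
    fun g => Prod.ext rfl (Fin.ext (by rw [blk3 hm hx hn hgcd σ hσ _ rfl]))
  have E0 := blk0 hm hx hn hgcd σ hσ
  have E2 := blk2 hm hx hn hgcd σ hσ
  have E2' := blk2 hm hx hn hgcd σ.symm hσ'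
  -- the image of a block-1 vertex
  have E1x : ∀ g : G, σ (x * g, (⟨1, by omega⟩ : Fin m)) =
      (x * (σ (g, (⟨3, by omega⟩ : Fin m))).1, (⟨1, by omega⟩ : Fin m)) := by
    intro g
    have hp0 : (σ (g, (⟨0, by omega⟩ : Fin m))).2.val = 0 := by rw [E0 g]
    have hadj0 : (DeltaCyc G m x δ).Adj (g, (⟨0, by omega⟩ : Fin m))
        (x * g, (⟨1, by omega⟩ : Fin m)) :=
      ((Uuniq hm (g, (⟨0, by omega⟩ : Fin m)) (x * g, (⟨1, by omega⟩ : Fin m)) rfl).mpr rfl).1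
    have hadj := (hσ _ _).mpr hadj0
    have hS := sS' hm hx hn hgcd σ hσ (x * g, (⟨1, by omega⟩ : Fin m))
      (by show ¬((1:ℕ) = 0 ∨ (1:ℕ) = 3); omega)
    have hne2 : (σ (x * g, (⟨1, by omega⟩ : Fin m))).2.val ≠ 2 := by
      intro h2
      have hu : σ (x * g, (⟨1, by omega⟩ : Fin m)) =
          ((σ (x * g, (⟨1, by omega⟩ : Fin m))).1, (⟨2, by omega⟩ : Fin m)) :=
        Prod.ext rfl (Fin.ext (by rw [h2]))
      have h3 := E2' ((σ (x * g, (⟨1, by omega⟩ : Fin m))).1)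
      rw [← hu, Equiv.symm_apply_apply] at h3
      have h4 := congrArg (fun q : G × Fin m => (Prod.snd q).val) h3
      exact (by omega : ¬((1:ℕ) = 2)) h4
    have := (Uuniq hm (σ (g, (⟨0, by omega⟩ : Fin m)))
        (σ (x * g, (⟨1, by omega⟩ : Fin m))) hp0).mp
      ⟨hadj, fun h => hS (Or.inl h), fun h => hS (Or.inr h), hne2⟩
    rw [E0 g] at this
    exact this
  have E1 : ∀ g : G, σ (g, (⟨1, by omega⟩ : Fin m)) =
      (x * (σ (x⁻¹ * g, (⟨3, by omega⟩ : Fin m))).1, (⟨1, by omega⟩ : Fin m)) := by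
    intro g
    have := E1x (x⁻¹ * g)
    rwa [mul_inv_cancel_left] at this
  -- the functional equation
  have Feq : ∀ g : G, (σ (x ^ δ * g, (⟨3, by omega⟩ : Fin m))).1 =
      x ^ δ * (x * (σ (x⁻¹ * g, (⟨3, by omega⟩ : Fin m))).1) := by
    intro g
    have hp1 : (σ (g, (⟨1, by omega⟩ : Fin m))).2.val = 1 := by rw [E1 g]
    have hadj0 := ((V2uniq hm (g, (⟨1, by omega⟩ : Fin m))
      (x ^ δ * g, (⟨2, by omega⟩ : Fin m)) rfl).mpr rfl).1
    have hadj := (hσ _ _).mpr hadj0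
    have hblk : (σ (x ^ δ * g, (⟨2, by omega⟩ : Fin m))).2.val = 2 := by
      rw [E2 (x ^ δ * g)]
    have := (V2uniq hm (σ (g, (⟨1, by omega⟩ : Fin m)))
        (σ (x ^ δ * g, (⟨2, by omega⟩ : Fin m))) hp1).mp ⟨hadj, hblk⟩
    rw [E2 (x ^ δ * g), E1 g] at this
    exact congrArg Prod.fst this
  have Fcomm : ∀ h : G, (σ (x ^ (1 + δ) * h, (⟨3, by omega⟩ : Fin m))).1 =
      x ^ (1 + δ) * (σ (h, (⟨3, by omega⟩ : Fin m))).1 := by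
    intro h
    have h1 : x ^ δ * (x * h) = x ^ (1 + δ) * h := by
      rw [← mul_assoc, ← pow_succ, Nat.add_comm δ 1]
    have h2 : x⁻¹ * (x * h) = h := inv_mul_cancel_left x h
    have h3 := Feq (x * h)
    rw [h1, h2] at h3
    rw [h3, ← mul_assoc, ← pow_succ, Nat.add_comm δ 1]
  have Hom : ∀ k : ℕ, ∀ h : G, (σ ((x ^ (1 + δ)) ^ k * h, (⟨3, by omega⟩ : Fin m))).1 =
      (x ^ (1 + δ)) ^ k * (σ (h, (⟨3, by omega⟩ : Fin m))).1 := by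
    intro k
    induction k with
    | zero => intro h; simp
    | succ k ih =>
      intro h
      have hps : (x ^ (1 + δ)) ^ (k + 1) = x ^ (1 + δ) * (x ^ (1 + δ)) ^ k := by
        rw [pow_succ']
      rw [hps, mul_assoc, Fcomm ((x ^ (1 + δ)) ^ k * h), ih h, ← mul_assoc]
  set a := (σ ((1 : G), (⟨3, by omega⟩ : Fin m))).1 with ha
  have Ephi : ∀ g : G, (σ (g, (⟨3, by omega⟩ : Fin m))).1 = g * a := by
    intro g
    obtain ⟨k, hk⟩ := hgen hx hn hgcd g
    have h1 := Hom k 1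
    rw [mul_one, hk] at h1
    exact h1
  have A3 : ∀ g : G, σ (g, (⟨3, by omega⟩ : Fin m)) = (g * a, (⟨3, by omega⟩ : Fin m)) :=
    fun g => by rw [E3 g, Ephi g]
  have A0 : ∀ g : G, σ (g, (⟨0, by omega⟩ : Fin m)) = (g * a, (⟨0, by omega⟩ : Fin m)) :=
    fun g => by rw [E0 g, Ephi g]
  have A2 : ∀ g : G, σ (g, (⟨2, by omega⟩ : Fin m)) = (g * a, (⟨2, by omega⟩ : Fin m)) :=
    fun g => by rw [E2 g, Ephi g]
  have A1 : ∀ g : G, σ (g, (⟨1, by omega⟩ : Fin m)) = (g * a, (⟨1, by omega⟩ : Fin m)) :=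
    fun g => by rw [E1 g, Ephi (x⁻¹ * g), ← mul_assoc, mul_inv_cancel_left]
  -- blocks ≥ 4, by induction
  have IND : ∀ t : ℕ, ∀ s : ℕ, s ≤ t → ∀ i : Fin m, i.val = 4 + s → ∀ g : G,
      σ (g, i) = (g * a, i) := by
    intro t
    induction t with
    | zero =>
      intro s hs i hi g
      have hi4 : i.val = 4 := by omega
      obtain ⟨c, hca, -⟩ := hthird hn g g
      have hadj0 : (DeltaCyc G m x δ).Adj (g, i) (c, (⟨1, by omega⟩ : Fin m)) :=
        (N4 hm hx1' (g, i) _ (by show 4 ≤ i.val; omega)).mpr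
          (Or.inr <| Or.inr <| Or.inr <| Or.inl ⟨hi4, rfl, hca⟩)
      have hadj := (hσ _ _).mpr hadj0
      rw [A1 c] at hadj
      have hM : (σ (g, i)).2.val = 1 ∨ (σ (g, i)).2.val = 4 ∨ (σ (g, i)).2.val = 0 ∨
          (σ (g, i)).2.val = 2 := M1 (c * a, (⟨1, by omega⟩ : Fin m)) (σ (g, i)) rfl hadj
      have hni : ∀ (k : ℕ) (hk : k < m), (∀ g' : G, σ (g', (⟨k, hk⟩ : Fin m)) =
          (g' * a, (⟨k, hk⟩ : Fin m))) → (σ (g, i)).2.val = k → i.val = k := by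
        intro k hk hA hval
        have hu : σ (g, i) = ((σ (g, i)).1, (⟨k, hk⟩ : Fin m)) :=
          Prod.ext rfl (Fin.ext (by rw [hval]))
        have h5 := hA ((σ (g, i)).1 * a⁻¹)
        rw [inv_mul_cancel_right, ← hu] at h5
        have h6 := σ.injective h5
        have h7 : k = i.val := congrArg (fun q : G × Fin m => (Prod.snd q).val) h6
        exact h7.symm
      have hw4 : (σ (g, i)).2.val = 4 := by
        rcases hM with h | h | h | h
        · exact absurd (hni 1 (by omega) A1 h) (by omega)
        · exact h
        · exact absurd (hni 0 (by omega) A0 h) (by omega)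
        · exact absurd (hni 2 (by omega) A2 h) (by omega)
      have hnon : ¬(DeltaCyc G m x δ).Adj (g, i) (g, (⟨1, by omega⟩ : Fin m)) := by
        intro hA
        have hA' := (N1 hm (g, (⟨1, by omega⟩ : Fin m)) (g, i) rfl).mp hA.symm
        rcases hA' with ⟨a1, a2⟩ | ⟨a1, a2⟩ | ⟨a1, a2⟩ | ⟨a1, a2⟩
        · exact a2 rfl
        · exact a2 rfl
        · have b1 : i.val = 0 := a1; omega
        · have b1 : i.val = 2 := a1; omega
      have hnon' : ¬(DeltaCyc G m x δ).Adj (σ (g, i)) (g * a, (⟨1, by omega⟩ : Fin m)) := by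
        intro hA
        rw [← A1 g] at hA
        exact hnon ((hσ _ _).mp hA)
      have hfst : (σ (g, i)).1 = g * a := by
        by_contra hne
        exact hnon' ((N4 hm hx1' (σ (g, i)) _ (by omega)).mpr
          (Or.inr <| Or.inr <| Or.inr <| Or.inl ⟨hw4, rfl, fun h => hne h.symm⟩))
      exact Prod.ext hfst (Fin.ext (by show (σ (g, i)).2.val = i.val; omega))
    | succ t ih =>
      intro s hs i hi g
      by_cases hst : s ≤ t
      · exact ih s hst i hi g
      · have hst' : s = t + 1 := by omega
        have hjm : 4 + t < m := by have := i.isLt; omega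
        have hiv : i.val = 5 + t := by omega
        have IHj : ∀ g' : G, σ (g', (⟨4 + t, hjm⟩ : Fin m)) =
            (g' * a, (⟨4 + t, hjm⟩ : Fin m)) := fun g' => ih t le_rfl _ rfl g'
        obtain ⟨c, hca, -⟩ := hthird hn g g
        have hadj0 : (DeltaCyc G m x δ).Adj (g, i) (c, (⟨4 + t, hjm⟩ : Fin m)) :=
          (N4 hm hx1' (g, i) _ (by show 4 ≤ i.val; omega)).mpr
            (Or.inr <| Or.inr <| Or.inl ⟨by show 5 ≤ i.val; omega,
              by show 4 + t = i.val - 1; omega, hca⟩)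
        have hadj := (hσ _ _).mpr hadj0
        rw [IHj c] at hadj
        have hM := M2 hm (c * a, (⟨4 + t, hjm⟩ : Fin m)) (σ (g, i))
          (by show 4 ≤ 4 + t; omega)
          (by show 4 + t ≤ m - 2; have := i.isLt; omega) hadj
        have hM' : (σ (g, i)).2.val = 4 + t ∨ (σ (g, i)).2.val = 4 + t + 1 ∨
            (5 ≤ 4 + t ∧ (σ (g, i)).2.val = 4 + t - 1) ∨
            (4 + t = 4 ∧ (σ (g, i)).2.val = 1) := hM
        have hni : ∀ (k : ℕ) (hk : k < m), (∀ g' : G, σ (g', (⟨k, hk⟩ : Fin m)) =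
            (g' * a, (⟨k, hk⟩ : Fin m))) → (σ (g, i)).2.val = k → i.val = k := by
          intro k hk hA hval
          have hu : σ (g, i) = ((σ (g, i)).1, (⟨k, hk⟩ : Fin m)) :=
            Prod.ext rfl (Fin.ext (by rw [hval]))
          have h5 := hA ((σ (g, i)).1 * a⁻¹)
          rw [inv_mul_cancel_right, ← hu] at h5
          have h6 := σ.injective h5
          have h7 : k = i.val := congrArg (fun q : G × Fin m => (Prod.snd q).val) h6
          exact h7.symm
        have hwv : (σ (g, i)).2.val = 5 + t := by
          rcases hM' with h | h | ⟨h5, h⟩ | ⟨h4, h⟩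
          · exact absurd (hni (4 + t) hjm IHj h) (by omega)
          · omega
          · exfalso
            have hj'm : 4 + (t - 1) < m := by omega
            have hIH' : ∀ g' : G, σ (g', (⟨4 + (t - 1), hj'm⟩ : Fin m)) =
                (g' * a, (⟨4 + (t - 1), hj'm⟩ : Fin m)) := fun g' => ih (t - 1) (by omega) _ rfl g'
            exact absurd (hni (4 + (t - 1)) hj'm hIH' (by omega)) (by omega)
          · exact absurd (hni 1 (by omega) A1 h) (by omega)
        have hnon : ¬(DeltaCyc G m x δ).Adj (g, i) (g, (⟨4 + t, hjm⟩ : Fin m)) := by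
          intro hA
          have hA' := (N4 hm hx1' (g, i) _ (by show 4 ≤ i.val; omega)).mp hA
          rcases hA' with ⟨a1, a2⟩ | ⟨a1, a2, a3⟩ | ⟨a1, a2, a3⟩ | ⟨a1, a2, a3⟩ | ⟨a1, a2, a3⟩
          · have b1 : (4 + t : ℕ) = i.val := a1; omega
          · have b1 : (4 + t : ℕ) = i.val + 1 := a2; omega
          · exact a3 rfl
          · have b1 : i.val = 4 := a1; omega
          · have b1 : (4 + t : ℕ) = 3 := a2; omega
        have hnon' : ¬(DeltaCyc G m x δ).Adj (σ (g, i)) (g * a, (⟨4 + t, hjm⟩ : Fin m)) := by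
          intro hA
          rw [← IHj g] at hA
          exact hnon ((hσ _ _).mp hA)
        have hfst : (σ (g, i)).1 = g * a := by
          by_contra hne
          exact hnon' ((N4 hm hx1' (σ (g, i)) _ (by omega)).mpr
            (Or.inr <| Or.inr <| Or.inl ⟨by omega,
              by show (4 + t : ℕ) = (σ (g, i)).2.val - 1; omega, fun h => hne h.symm⟩))
        exact Prod.ext hfst (Fin.ext (by show (σ (g, i)).2.val = i.val; omega))
  refine ⟨a, fun p => ?_⟩
  obtain ⟨g, i⟩ := p
  rcases (show i.val = 0 ∨ i.val = 1 ∨ i.val = 2 ∨ i.val = 3 ∨ 4 ≤ i.val from by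
    have := i.isLt; omega) with h | h | h | h | h
  · have hieq : i = (⟨0, by omega⟩ : Fin m) := Fin.ext (by rw [h])
    rw [hieq]; exact A0 g
  · have hieq : i = (⟨1, by omega⟩ : Fin m) := Fin.ext (by rw [h])
    rw [hieq]; exact A1 g
  · have hieq : i = (⟨2, by omega⟩ : Fin m) := Fin.ext (by rw [h])
    rw [hieq]; exact A2 g
  · have hieq : i = (⟨3, by omega⟩ : Fin m) := Fin.ext (by rw [h])
    rw [hieq]; exact A3 g
  · exact IND (i.val - 4) (i.val - 4) le_rfl i (by omega) g

end Rigid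

/-- right translations are automorphisms -/
lemma trans_aut (g : G) (p q : G × Fin m) :
    (DeltaCyc G m x δ).Adj (p.1 * g, p.2) (q.1 * g, q.2) ↔ (DeltaCyc G m x δ).Adj p q := by
  have key : ∀ y : G, q.1 * g * (p.1 * g)⁻¹ = y ↔ q.1 * p.1⁻¹ = y := by
    intro y
    rw [mul_inv_rev, show q.1 * g * (g⁻¹ * p.1⁻¹) = q.1 * p.1⁻¹ from by group]
  have key' : ∀ y : G, p.1 * g * (q.1 * g)⁻¹ = y ↔ p.1 * q.1⁻¹ = y := by
    intro y
    rw [mul_inv_rev, show p.1 * g * (g⁻¹ * q.1⁻¹) = p.1 * q.1⁻¹ from by group]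
  have key2 : (q.1 * g = x * (p.1 * g)) ↔ (q.1 = x * p.1) := by
    rw [← mul_assoc, mul_left_inj]
  have key2' : (p.1 * g = x * (q.1 * g)) ↔ (p.1 = x * q.1) := by
    rw [← mul_assoc, mul_left_inj]
  rw [adj_iff, adj_iff]
  simp only [ne_eq, Prod.mk.injEq, Prod.ext_iff, mul_left_inj, key, key', key2, key2']

section Degree

/-- slice of a block -/
def Bset (G : Type*) (m : ℕ) (j : ℕ) (s : Set G) : Set (G × Fin m) :=
  {w | w.2.val = j ∧ w.1 ∈ s}

lemma Bset_ncard {j : ℕ} (hj : j < m) (s : Set G) : (Bset G m j s).ncard = s.ncard := by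
  have himg : Bset G m j s = (fun g => (g, (⟨j, hj⟩ : Fin m))) '' s := by
    ext ⟨w1, w2⟩
    simp only [Bset, Set.mem_setOf_eq, Set.mem_image, Prod.mk.injEq]
    constructor
    · rintro ⟨h1, h2⟩
      exact ⟨w1, h2, rfl, Fin.ext h1.symm⟩
    · rintro ⟨c, hc, h1, h2⟩
      subst h1
      exact ⟨by rw [← h2], hc⟩
  rw [himg, Set.ncard_image_of_injective _ (fun a b h => congrArg Prod.fst h)]

lemma Bset_disj {j j' : ℕ} (h : j ≠ j') (s s' : Set G) :
    Disjoint (Bset G m j s) (Bset G m j' s') := by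
  rw [Set.disjoint_left]
  rintro w ⟨h1, -⟩ ⟨h2, -⟩
  omega

lemma ncard3 [Finite G] {j1 j2 j3 : ℕ} (h12 : j1 ≠ j2) (h13 : j1 ≠ j3) (h23 : j2 ≠ j3)
    (s1 s2 s3 : Set G) :
    (Bset G m j1 s1 ∪ Bset G m j2 s2 ∪ Bset G m j3 s3).ncard =
      (Bset G m j1 s1).ncard + (Bset G m j2 s2).ncard + (Bset G m j3 s3).ncard := by
  rw [Set.ncard_union_eq (Set.disjoint_union_left.mpr ⟨Bset_disj h13 _ _, Bset_disj h23 _ _⟩),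
    Set.ncard_union_eq (Bset_disj h12 _ _)]

lemma ncard4 [Finite G] {j1 j2 j3 j4 : ℕ} (h12 : j1 ≠ j2) (h13 : j1 ≠ j3) (h14 : j1 ≠ j4)
    (h23 : j2 ≠ j3) (h24 : j2 ≠ j4) (h34 : j3 ≠ j4) (s1 s2 s3 s4 : Set G) :
    (Bset G m j1 s1 ∪ Bset G m j2 s2 ∪ Bset G m j3 s3 ∪ Bset G m j4 s4).ncard =
      (Bset G m j1 s1).ncard + (Bset G m j2 s2).ncard + (Bset G m j3 s3).ncard +
        (Bset G m j4 s4).ncard := by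
  rw [Set.ncard_union_eq (Set.disjoint_union_left.mpr ⟨Set.disjoint_union_left.mpr
      ⟨Bset_disj h14 _ _, Bset_disj h24 _ _⟩, Bset_disj h34 _ _⟩),
    Set.ncard_union_eq (Set.disjoint_union_left.mpr ⟨Bset_disj h13 _ _, Bset_disj h23 _ _⟩),
    Set.ncard_union_eq (Bset_disj h12 _ _)]

lemma compl_ncard [Finite G] (g : G) : ({g}ᶜ : Set G).ncard = Nat.card G - 1 := by
  rw [Set.compl_eq_univ_diff, Set.ncard_diff (Set.subset_univ _), Set.ncard_univ,
    Set.ncard_singleton]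

theorem degree [Finite G] (hm : 5 ≤ m) (hx : Subgroup.zpowers x = ⊤) (hn : 3 ≤ Nat.card G)
    (v : G × Fin m) :
    ((DeltaCyc G m x δ).neighborSet v).ncard = 2 * Nat.card G := by
  have hx1' : x ≠ 1 := hx1 hx hn
  have hxx' : x * x ≠ 1 := hxx hx hn
  obtain ⟨g, i⟩ := v
  have him : i.val < m := i.isLt
  rcases (show i.val = 0 ∨ i.val = 1 ∨ i.val = 2 ∨ i.val = 3 ∨ 4 ≤ i.val from by omega)
    with hi | hi | hi | hi | hi
  · have hset : (DeltaCyc G m x δ).neighborSet (g, i) =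
        Bset G m 3 Set.univ ∪ Bset G m 2 {g}ᶜ ∪ Bset G m 1 {x * g} := by
      ext w
      rw [SimpleGraph.mem_neighborSet, N0 hm (g, i) w hi]
      simp only [Bset, Set.mem_union, Set.mem_setOf_eq, Set.mem_compl_iff,
        Set.mem_singleton_iff, Set.mem_univ, and_true]
      tauto
    rw [hset, ncard3 (by omega) (by omega) (by omega), Bset_ncard (by omega),
      Bset_ncard (by omega), Bset_ncard (by omega), Set.ncard_univ, compl_ncard,
      Set.ncard_singleton]
    omega
  · have hset : (DeltaCyc G m x δ).neighborSet (g, i) =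
        Bset G m 1 {g}ᶜ ∪ Bset G m 4 {g}ᶜ ∪ Bset G m 0 {x⁻¹ * g} ∪ Bset G m 2 {x ^ δ * g} := by
      ext w
      rw [SimpleGraph.mem_neighborSet, N1 hm (g, i) w hi]
      simp only [Bset, Set.mem_union, Set.mem_setOf_eq, Set.mem_compl_iff,
        Set.mem_singleton_iff]
      constructor
      · rintro (⟨h1, h2⟩ | ⟨h1, h2⟩ | ⟨h1, h2⟩ | ⟨h1, h2⟩)
        · exact Or.inl (Or.inl (Or.inl ⟨h1, h2⟩))
        · exact Or.inl (Or.inl (Or.inr ⟨h1, h2⟩))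
        · exact Or.inl (Or.inr ⟨h1, by rw [h2, inv_mul_cancel_left]⟩)
        · exact Or.inr ⟨h1, h2⟩
      · rintro (((⟨h1, h2⟩ | ⟨h1, h2⟩) | ⟨h1, h2⟩) | ⟨h1, h2⟩)
        · exact Or.inl ⟨h1, h2⟩
        · exact Or.inr (Or.inl ⟨h1, h2⟩)
        · exact Or.inr (Or.inr (Or.inl ⟨h1, by rw [h2, mul_inv_cancel_left]⟩))
        · exact Or.inr (Or.inr (Or.inr ⟨h1, h2⟩))
    rw [hset, ncard4 (by omega) (by omega) (by omega) (by omega) (by omega) (by omega),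
      Bset_ncard (by omega), Bset_ncard (by omega), Bset_ncard (by omega),
      Bset_ncard (by omega), compl_ncard, Set.ncard_singleton, Set.ncard_singleton]
    omega
  · have hset : (DeltaCyc G m x δ).neighborSet (g, i) =
        Bset G m 2 {g}ᶜ ∪ Bset G m 0 {g}ᶜ ∪ Bset G m 3 {g} ∪
          Bset G m 1 {(x ^ δ)⁻¹ * g} := by
      ext w
      rw [SimpleGraph.mem_neighborSet, N2 hm (g, i) w hi]
      simp only [Bset, Set.mem_union, Set.mem_setOf_eq, Set.mem_compl_iff,
        Set.mem_singleton_iff]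
      constructor
      · rintro (⟨h1, h2⟩ | ⟨h1, h2⟩ | ⟨h1, h2⟩ | ⟨h1, h2⟩)
        · exact Or.inl (Or.inl (Or.inl ⟨h1, h2⟩))
        · exact Or.inl (Or.inl (Or.inr ⟨h1, h2⟩))
        · exact Or.inl (Or.inr ⟨h1, h2⟩)
        · exact Or.inr ⟨h1, by rw [h2, inv_mul_cancel_left]⟩
      · rintro (((⟨h1, h2⟩ | ⟨h1, h2⟩) | ⟨h1, h2⟩) | ⟨h1, h2⟩)
        · exact Or.inl ⟨h1, h2⟩
        · exact Or.inr (Or.inl ⟨h1, h2⟩)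
        · exact Or.inr (Or.inr (Or.inl ⟨h1, h2⟩))
        · exact Or.inr (Or.inr (Or.inr ⟨h1, by rw [h2, mul_inv_cancel_left]⟩))
    rw [hset, ncard4 (by omega) (by omega) (by omega) (by omega) (by omega) (by omega),
      Bset_ncard (by omega), Bset_ncard (by omega), Bset_ncard (by omega),
      Bset_ncard (by omega), compl_ncard, Set.ncard_singleton, Set.ncard_singleton]
    omega
  · have hset : (DeltaCyc G m x δ).neighborSet (g, i) =
        Bset G m 0 Set.univ ∪ Bset G m (m - 1) {g}ᶜ ∪ Bset G m 2 {g} := by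
      ext w
      rw [SimpleGraph.mem_neighborSet, N3 hm (g, i) w hi]
      simp only [Bset, Set.mem_union, Set.mem_setOf_eq, Set.mem_compl_iff,
        Set.mem_singleton_iff, Set.mem_univ, and_true]
      tauto
    rw [hset, ncard3 (by omega) (by omega) (by omega), Bset_ncard (by omega),
      Bset_ncard (by omega), Bset_ncard (by omega), Set.ncard_univ, compl_ncard,
      Set.ncard_singleton]
    omega
  · obtain ⟨j1, j2, hj1m, hj2m, hj1i, hj2i, hj12, hchar⟩ :
        ∃ j1 j2 : ℕ, j1 < m ∧ j2 < m ∧ j1 ≠ i.val ∧ j2 ≠ i.val ∧ j1 ≠ j2 ∧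
          ∀ k : ℕ, ((i.val ≤ m - 2 ∧ k = i.val + 1) ∨ (5 ≤ i.val ∧ k = i.val - 1) ∨
            (i.val = 4 ∧ k = 1) ∨ (i.val = m - 1 ∧ k = 3)) ↔ (k = j1 ∨ k = j2) := by
      by_cases h4 : i.val = 4
      · by_cases hlast : i.val = m - 1
        · exact ⟨1, 3, by omega, by omega, by omega, by omega, by omega, fun k => by omega⟩
        · exact ⟨1, i.val + 1, by omega, by omega, by omega, by omega, by omega,
            fun k => by omega⟩
      · by_cases hlast : i.val = m - 1
        · exact ⟨i.val - 1, 3, by omega, by omega, by omega, by omega, by omega,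
            fun k => by omega⟩
        · exact ⟨i.val - 1, i.val + 1, by omega, by omega, by omega, by omega, by omega,
            fun k => by omega⟩
    have hset : (DeltaCyc G m x δ).neighborSet (g, i) =
        Bset G m i.val {x * g, x⁻¹ * g} ∪ Bset G m j1 {g}ᶜ ∪ Bset G m j2 {g}ᶜ := by
      ext w
      rw [SimpleGraph.mem_neighborSet, N4 hm hx1' (g, i) w hi]
      simp only [Bset, Set.mem_union, Set.mem_setOf_eq, Set.mem_compl_iff,
        Set.mem_singleton_iff, Set.mem_insert_iff]
      constructor
      · rintro (⟨h1, h2 | h2⟩ | ⟨h1, h2, h3⟩ | ⟨h1, h2, h3⟩ | ⟨h1, h2, h3⟩ | ⟨h1, h2, h3⟩)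
        · exact Or.inl (Or.inl ⟨h1, Or.inl h2⟩)
        · exact Or.inl (Or.inl ⟨h1, Or.inr (by rw [h2, inv_mul_cancel_left])⟩)
        · rcases (hchar w.2.val).mp (Or.inl ⟨h1, h2⟩) with hj | hj
          · exact Or.inl (Or.inr ⟨hj, h3⟩)
          · exact Or.inr ⟨hj, h3⟩
        · rcases (hchar w.2.val).mp (Or.inr (Or.inl ⟨h1, h2⟩)) with hj | hj
          · exact Or.inl (Or.inr ⟨hj, h3⟩)
          · exact Or.inr ⟨hj, h3⟩
        · rcases (hchar w.2.val).mp (Or.inr (Or.inr (Or.inl ⟨h1, h2⟩))) with hj | hj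
          · exact Or.inl (Or.inr ⟨hj, h3⟩)
          · exact Or.inr ⟨hj, h3⟩
        · rcases (hchar w.2.val).mp (Or.inr (Or.inr (Or.inr ⟨h1, h2⟩))) with hj | hj
          · exact Or.inl (Or.inr ⟨hj, h3⟩)
          · exact Or.inr ⟨hj, h3⟩
      · rintro ((⟨h1, h2 | h2⟩ | ⟨h1, h2⟩) | ⟨h1, h2⟩)
        · exact Or.inl ⟨h1, Or.inl h2⟩
        · exact Or.inl ⟨h1, Or.inr (by rw [h2, mul_inv_cancel_left])⟩
        · rcases (hchar j1).mpr (Or.inl rfl) with ⟨c1, c2⟩ | ⟨c1, c2⟩ | ⟨c1, c2⟩ | ⟨c1, c2⟩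
          · exact Or.inr (Or.inl ⟨c1, by omega, h2⟩)
          · exact Or.inr (Or.inr (Or.inl ⟨c1, by omega, h2⟩))
          · exact Or.inr (Or.inr (Or.inr (Or.inl ⟨c1, by omega, h2⟩)))
          · exact Or.inr (Or.inr (Or.inr (Or.inr ⟨c1, by omega, h2⟩)))
        · rcases (hchar j2).mpr (Or.inr rfl) with ⟨c1, c2⟩ | ⟨c1, c2⟩ | ⟨c1, c2⟩ | ⟨c1, c2⟩
          · exact Or.inr (Or.inl ⟨c1, by omega, h2⟩)
          · exact Or.inr (Or.inr (Or.inl ⟨c1, by omega, h2⟩))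
          · exact Or.inr (Or.inr (Or.inr (Or.inl ⟨c1, by omega, h2⟩)))
          · exact Or.inr (Or.inr (Or.inr (Or.inr ⟨c1, by omega, h2⟩)))
    have hpair : ({x * g, x⁻¹ * g} : Set G).ncard = 2 := by
      refine Set.ncard_pair (fun h => hxx' ?_)
      have hxi : x = x⁻¹ := mul_right_cancel h
      nth_rewrite 2 [hxi]
      exact mul_inv_cancel x
    rw [hset, ncard3 (by omega) (by omega) (by omega), Bset_ncard (by omega),
      Bset_ncard (by omega), Bset_ncard (by omega), hpair, compl_ncard]
    omega

end Degree

end S13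

/-- for a cyclic group `G = ⟨x⟩` of order `n ≥ 3` and `m ≥ 5`, the
automorphism group of `Δ` is exactly the group of right translations by `G`; in
particular `G` has an m-GRR. -/
theorem statement_13 (G : Type*) [Group G] [Finite G]
    (x : G) (hx : Subgroup.zpowers x = ⊤) (hn : 3 ≤ Nat.card G)
    (m : ℕ) (hm : 5 ≤ m)
    (δ : ℕ) (hδ : δ ≤ Nat.card G - 1) (hgcd : Nat.gcd (1 + δ) (Nat.card G) = 1) :
    ((∀ (g : G) (p q : G × Fin m),
        (DeltaCyc G m x δ).Adj (p.1 * g, p.2) (q.1 * g, q.2) ↔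
          (DeltaCyc G m x δ).Adj p q) ∧
      (∀ σ : Equiv.Perm (G × Fin m), IsGraphAut (DeltaCyc G m x δ) σ →
        ∃ g : G, ∀ p : G × Fin m, σ p = (p.1 * g, p.2))) ∧
    HasMGRR G m := by
  classical
  refine ⟨⟨fun g p q => S13.trans_aut g p q,
    fun σ hσ => S13.rigid hm hx hn hgcd σ hσ⟩, ?_⟩
  -- HasMGRR
  let e : G ≃ Fin (Nat.card G) := Finite.equivFin G
  let E : (G × Fin m) ≃ (Fin (Nat.card G) × Fin m) := e.prodCongr (Equiv.refl _)
  let ρ₀ : G → Equiv.Perm (G × Fin m) :=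
    fun g => (Equiv.mulRight g⁻¹).prodCongr (Equiv.refl _)
  have hρ₀ : ∀ g (p : G × Fin m), ρ₀ g p = (p.1 * g⁻¹, p.2) := fun g p => rfl
  let ρfun : G → Equiv.Perm (Fin (Nat.card G) × Fin m) :=
    fun g => (E.symm.trans (ρ₀ g)).trans E
  have hρ : ∀ g v, ρfun g v = E (ρ₀ g (E.symm v)) := fun g v => rfl
  refine ⟨Fin (Nat.card G) × Fin m, inferInstance, (DeltaCyc G m x δ).comap (⇑E.symm),
    { toFun := ρfun, map_one' := ?_, map_mul' := ?_ }, ⟨2 * Nat.card G, ?_⟩,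
    ?_, ?_, ?_, ?_, ?_⟩
  · -- map_one
    apply Equiv.ext
    intro v
    show E (ρ₀ 1 (E.symm v)) = v
    rw [hρ₀]
    simp
  · -- map_mul
    intro g h
    apply Equiv.ext
    intro v
    show E (ρ₀ (g * h) (E.symm v)) = (ρfun g) ((ρfun h) v)
    rw [hρ g, hρ h, Equiv.symm_apply_apply, hρ₀, hρ₀, hρ₀]
    simp [mul_inv_rev, mul_assoc]
  · -- regular
    intro v
    have hset : ((DeltaCyc G m x δ).comap (⇑E.symm)).neighborSet v =
        E '' ((DeltaCyc G m x δ).neighborSet (E.symm v)) := by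
      ext w
      simp only [SimpleGraph.mem_neighborSet, SimpleGraph.comap_adj, Set.mem_image]
      constructor
      · intro h
        exact ⟨E.symm w, h, Equiv.apply_symm_apply E w⟩
      · rintro ⟨u, hu, rfl⟩
        rwa [Equiv.symm_apply_apply]
    rw [hset, Set.ncard_image_of_injective _ E.injective]
    exact S13.degree hm hx hn (E.symm v)
  · -- translations are automorphisms
    intro g u v
    show (DeltaCyc G m x δ).Adj (E.symm (E (ρ₀ g (E.symm u)))) (E.symm (E (ρ₀ g (E.symm v))))
      ↔ (DeltaCyc G m x δ).Adj (E.symm u) (E.symm v)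
    rw [Equiv.symm_apply_apply, Equiv.symm_apply_apply, hρ₀, hρ₀]
    exact S13.trans_aut g⁻¹ (E.symm u) (E.symm v)
  · -- completeness
    intro σ hσ
    have hτ : IsGraphAut (DeltaCyc G m x δ) ((E.trans σ).trans E.symm) := by
      intro p q
      show (DeltaCyc G m x δ).Adj (E.symm (σ (E p))) (E.symm (σ (E q))) ↔ _
      have h1 := hσ (E p) (E q)
      simp only [SimpleGraph.comap_adj] at h1
      rw [h1, Equiv.symm_apply_apply, Equiv.symm_apply_apply]
    obtain ⟨a, ha⟩ := S13.rigid hm hx hn hgcd _ hτ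
    refine ⟨a⁻¹, Equiv.ext fun v => ?_⟩
    have h2 := ha (E.symm v)
    show E (ρ₀ a⁻¹ (E.symm v)) = σ v
    rw [hρ₀, inv_inv]
    have h3 : ((E.trans σ).trans E.symm) (E.symm v) = ((E.symm v).1 * a, (E.symm v).2) := h2
    show E ((E.symm v).1 * a, (E.symm v).2) = σ v
    rw [← h3]
    show E (E.symm (σ (E (E.symm v)))) = σ v
    rw [Equiv.apply_symm_apply, Equiv.apply_symm_apply]
  · -- injectivity
    intro g h hgh
    have hgh' : ρfun g = ρfun h := hgh
    have h1 : ρfun g (E ((1 : G), (⟨0, by omega⟩ : Fin m))) =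
        ρfun h (E ((1 : G), (⟨0, by omega⟩ : Fin m))) := by rw [hgh']
    rw [hρ, hρ, Equiv.symm_apply_apply] at h1
    have h2 := E.injective h1
    rw [hρ₀, hρ₀] at h2
    have h3 : (1 : G) * g⁻¹ = 1 * h⁻¹ := congrArg Prod.fst h2
    rw [one_mul, one_mul] at h3
    exact inv_injective h3
  · -- semiregular
    intro g v hgv
    have hgv' : ρfun g v = v := hgv
    have h1 : ρ₀ g (E.symm v) = E.symm v := by
      have := congrArg E.symm hgv'
      rwa [hρ, Equiv.symm_apply_apply] at this
    rw [hρ₀] at h1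
    have h2 : (E.symm v).1 * g⁻¹ = (E.symm v).1 := congrArg Prod.fst h1
    have h3 : g⁻¹ = 1 := mul_eq_left.mp h2
    exact inv_eq_one.mp h3
  · -- orbit representatives
    refine ⟨fun i => E ((1 : G), i), fun v => ⟨(E.symm v).2, ⟨(E.symm v).1⁻¹, ?_⟩, ?_⟩⟩
    · show E (ρ₀ (E.symm v).1⁻¹ (E.symm (E ((1 : G), (E.symm v).2)))) = v
      rw [Equiv.symm_apply_apply, hρ₀, inv_inv]
      show E ((1 : G) * (E.symm v).1, (E.symm v).2) = v
      rw [one_mul]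
      show E ((E.symm v).1, (E.symm v).2) = v
      rw [Prod.mk.eta, Equiv.apply_symm_apply]
    · rintro i ⟨g, hg⟩
      have hg' : ρfun g (E ((1 : G), i)) = v := hg
      have h1 : E (ρ₀ g (E.symm (E ((1 : G), i)))) = v := hg'
      rw [Equiv.symm_apply_apply, hρ₀] at h1
      have h2 := congrArg (fun q : G × Fin m => (Prod.snd q)) (congrArg E.symm h1)
      simp only [Equiv.symm_apply_apply] at h2
      exact h2
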